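/- Let N ≥ 0 and let ν_{j,N} = -cos((2j+1)π/(2N+2)) for j = 0, 1, ..., N be the Chebyshev points of the first kind. Then for every real polynomial p of degree at most 2N+1, ∫_{-1}^{1} p(x)/√(1-x²) dx = Σ_{j=0}^{N} (π/(N+1)) · p(ν_{j,N}). -/

import Mathlib

open Polynomial Real MeasureTheory Set



lemma sum_cos_odd (x : ℝ) (hx : Real.sin x ≠ 0) (N : ℕ) :
    ∑ j ∈ Finset.range (N + 1), Real.cos ((2 * (j : ℝ) + 1) * x)
      = Real.sin (2 * ((N : ℝ) + 1) * x) / (2 * Real.sin x) := by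
  induction N with
  | zero =>
      have h2 : Real.sin (2 * ((0:ℝ) + 1) * x) = 2 * Real.sin x * Real.cos x := by
        rw [show 2 * ((0:ℝ) + 1) * x = 2 * x by ring, Real.sin_two_mul]
      simp only [Finset.sum_range_one, Nat.cast_zero]
      rw [h2]
      field_simp
      simp
  | succ n ih =>
      have key : Real.sin (2 * ((n:ℝ) + 1 + 1) * x) - Real.sin (2 * ((n:ℝ) + 1) * x)
          = 2 * Real.sin x * Real.cos ((2 * ((n:ℝ) + 1) + 1) * x) := by
        have h1 : (2 * ((n:ℝ) + 1 + 1) * x - 2 * ((n:ℝ) + 1) * x) / 2 = x := by ring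
        have h2 : (2 * ((n:ℝ) + 1 + 1) * x + 2 * ((n:ℝ) + 1) * x) / 2
            = (2 * ((n:ℝ) + 1) + 1) * x := by ring
        rw [Real.sin_sub_sin, h1, h2]
      rw [Finset.sum_range_succ, ih]
      push_cast
      field_simp
      rw [show x * (2 * ((n:ℝ) + 1) + 1) = (2 * ((n:ℝ) + 1) + 1) * x by ring,
        show 2 * x * ((n:ℝ) + 1 + 1) = 2 * ((n:ℝ) + 1 + 1) * x by ring]
      linarith [key]


lemma T_deg : ∀ k : ℕ, (Polynomial.Chebyshev.T ℝ (k : ℤ)).natDegree = k ∧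
    (Polynomial.Chebyshev.T ℝ (k : ℤ)).leadingCoeff = 2 ^ (k - 1) := by
  intro k
  induction k using Nat.strong_induction_on with
  | _ k ih =>
    match k with
    | 0 => simp [Polynomial.Chebyshev.T_zero]
    | 1 => simp [Polynomial.Chebyshev.T_one]
    | (n+2) =>
        obtain ⟨hd1, hl1⟩ := ih (n+1) (by omega)
        obtain ⟨hd0, hl0⟩ := ih n (by omega)
        have hrec : Polynomial.Chebyshev.T ℝ ((n+2 : ℕ) : ℤ)
            = 2 * Polynomial.X * Polynomial.Chebyshev.T ℝ ((n+1 : ℕ) : ℤ)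
              - Polynomial.Chebyshev.T ℝ (n : ℤ) := by
          have h := Polynomial.Chebyshev.T_add_two ℝ (n : ℤ)
          have e2 : ((n+2 : ℕ) : ℤ) = (n : ℤ) + 2 := by push_cast; ring
          have e1 : ((n+1 : ℕ) : ℤ) = (n : ℤ) + 1 := by push_cast; ring
          rw [e2, e1, h]
        have hT1ne : Polynomial.Chebyshev.T ℝ ((n+1 : ℕ) : ℤ) ≠ 0 := by
          rw [← Polynomial.leadingCoeff_ne_zero, hl1]; positivity
        have hT0ne : Polynomial.Chebyshev.T ℝ ((n : ℕ) : ℤ) ≠ 0 := by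
          rw [← Polynomial.leadingCoeff_ne_zero, hl0]; positivity
        have h2X : (2 * Polynomial.X : Polynomial ℝ) = Polynomial.C 2 * Polynomial.X := by
          rw [map_ofNat]
        have h2Xne : (2 * Polynomial.X : Polynomial ℝ) ≠ 0 := by
          rw [h2X]
          intro h
          have := Polynomial.natDegree_C_mul_X (2:ℝ) (by norm_num)
          rw [h] at this; simp at this
        have hdA : (2 * Polynomial.X * Polynomial.Chebyshev.T ℝ ((n+1 : ℕ) : ℤ)).natDegree
            = n + 2 := by
          rw [Polynomial.natDegree_mul h2Xne hT1ne, hd1, h2X,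
            Polynomial.natDegree_C_mul_X (2:ℝ) (by norm_num)]
          omega
        have hlA : (2 * Polynomial.X * Polynomial.Chebyshev.T ℝ ((n+1 : ℕ) : ℤ)).leadingCoeff
            = 2 ^ (n + 1) := by
          rw [Polynomial.leadingCoeff_mul, hl1, h2X, Polynomial.leadingCoeff_C_mul_X]
          simp [pow_succ]; ring
        have hAne : (2 * Polynomial.X * Polynomial.Chebyshev.T ℝ ((n+1 : ℕ) : ℤ)) ≠ 0 := by
          rw [← Polynomial.leadingCoeff_ne_zero, hlA]; positivity
        have hdlt : (Polynomial.Chebyshev.T ℝ ((n : ℕ) : ℤ)).degree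
            < (2 * Polynomial.X * Polynomial.Chebyshev.T ℝ ((n+1 : ℕ) : ℤ)).degree := by
          rw [Polynomial.degree_eq_natDegree hT0ne, Polynomial.degree_eq_natDegree hAne,
            hd0, hdA]
          exact_mod_cast by omega
        constructor
        · rw [hrec, Polynomial.natDegree_sub_eq_left_of_natDegree_lt
            (by rw [hd0, hdA]; omega), hdA]
        · rw [hrec, Polynomial.leadingCoeff_sub_of_degree_lt hdlt, hlA]
          norm_num


lemma cheb_subst (f : ℝ → ℝ) :
    ∫ x in (-1:ℝ)..1, f x / Real.sqrt (1 - x ^ 2) = ∫ θ in (0:ℝ)..π, f (Real.cos θ) := by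
  have himg : Real.cos '' Set.Ioo 0 π = Set.Ioo (-1 : ℝ) 1 := by
    apply Set.Subset.antisymm
    · rintro _ ⟨θ, hθ, rfl⟩
      obtain ⟨h0, hπ⟩ := hθ
      constructor
      · have := Real.strictAntiOn_cos
          (Set.mem_Icc.2 ⟨h0.le, hπ.le⟩)
          (Set.mem_Icc.2 ⟨le_of_lt (lt_trans h0 hπ), le_refl π⟩) hπ
        simpa [Real.cos_pi] using this
      · have := Real.strictAntiOn_cos
          (Set.mem_Icc.2 ⟨le_refl 0, le_of_lt (lt_trans h0 hπ)⟩)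
          (Set.mem_Icc.2 ⟨h0.le, hπ.le⟩) h0
        simpa [Real.cos_zero] using this
    · rintro y ⟨hy1, hy2⟩
      refine ⟨Real.arccos y, ⟨Real.arccos_pos.2 hy2, ?_⟩, Real.cos_arccos hy1.le hy2.le⟩
      have h := Real.neg_pi_div_two_lt_arcsin (x := y)
      rw [Real.arccos]
      have : -(π/2) < Real.arcsin y := h.2 hy1
      linarith
  have hderiv : ∀ θ ∈ Set.Ioo (0:ℝ) π,
      HasDerivWithinAt Real.cos (-Real.sin θ) (Set.Ioo (0:ℝ) π) θ :=
    fun θ _ => (Real.hasDerivAt_cos θ).hasDerivWithinAt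
  have hinj : Set.InjOn Real.cos (Set.Ioo (0:ℝ) π) :=
    Real.injOn_cos.mono (fun x hx => Set.mem_Icc.2 ⟨hx.1.le, hx.2.le⟩)
  have key := MeasureTheory.integral_image_eq_integral_abs_deriv_smul
    measurableSet_Ioo hderiv hinj (fun x => f x / Real.sqrt (1 - x ^ 2))
  rw [himg] at key
  have hsimp : ∀ θ ∈ Set.Ioo (0:ℝ) π,
      |(-Real.sin θ)| • (f (Real.cos θ) / Real.sqrt (1 - Real.cos θ ^ 2))
        = f (Real.cos θ) := by
    intro θ hθ
    have hs : 0 < Real.sin θ := Real.sin_pos_of_pos_of_lt_pi hθ.1 hθ.2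
    have h1 : (1 : ℝ) - Real.cos θ ^ 2 = Real.sin θ ^ 2 := by
      have := Real.sin_sq_add_cos_sq θ; linarith
    rw [h1, Real.sqrt_sq hs.le, abs_neg, abs_of_pos hs, smul_eq_mul]
    field_simp
  rw [intervalIntegral.integral_of_le (by norm_num : (-1:ℝ) ≤ 1),
    intervalIntegral.integral_of_le Real.pi_pos.le,
    MeasureTheory.integral_Ioc_eq_integral_Ioo,
    MeasureTheory.integral_Ioc_eq_integral_Ioo, key,
    MeasureTheory.setIntegral_congr_fun measurableSet_Ioo hsimp]


noncomputable def gcQ (N : ℕ) (p : Polynomial ℝ) : ℝ :=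
  (∫ θ in (0:ℝ)..π, p.eval (Real.cos θ)) -
    ∑ j ∈ Finset.range (N + 1),
      (π / ((N : ℝ) + 1)) * p.eval (-Real.cos ((2 * (j : ℝ) + 1) * π / (2 * (N : ℝ) + 2)))

lemma gcQ_add (N : ℕ) (p q : Polynomial ℝ) : gcQ N (p + q) = gcQ N p + gcQ N q := by
  unfold gcQ
  have hip : IntervalIntegrable (fun θ => p.eval (Real.cos θ)) volume 0 π :=
    ((p.continuous_aeval).comp Real.continuous_cos).intervalIntegrable 0 π
  have hiq : IntervalIntegrable (fun θ => q.eval (Real.cos θ)) volume 0 π :=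
    ((q.continuous_aeval).comp Real.continuous_cos).intervalIntegrable 0 π
  simp only [Polynomial.eval_add]
  rw [intervalIntegral.integral_add hip hiq]
  simp only [mul_add]
  rw [Finset.sum_add_distrib]
  ring

lemma gcQ_smul (N : ℕ) (c : ℝ) (p : Polynomial ℝ) :
    gcQ N (Polynomial.C c * p) = c * gcQ N p := by
  unfold gcQ
  simp only [Polynomial.eval_mul, Polynomial.eval_C]
  rw [intervalIntegral.integral_const_mul, mul_sub, Finset.mul_sum]
  congr 1
  exact Finset.sum_congr rfl fun j _ => by ring

lemma gcQ_T (N : ℕ) (k : ℕ) (hk : k ≤ 2 * N + 1) :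
    gcQ N (Polynomial.Chebyshev.T ℝ (k : ℤ)) = 0 := by
  unfold gcQ
  have heval : ∀ y : ℝ, (Polynomial.Chebyshev.T ℝ (k : ℤ)).eval (Real.cos y)
      = Real.cos ((k : ℝ) * y) := by
    intro y
    have := Polynomial.Chebyshev.T_real_cos y (k : ℤ)
    push_cast at this ⊢
    exact this
  -- the sum side
  have hsum : ∀ j : ℕ,
      (Polynomial.Chebyshev.T ℝ (k : ℤ)).eval (-Real.cos ((2 * (j : ℝ) + 1) * π / (2 * (N : ℝ) + 2)))
        = (-1) ^ k * Real.cos ((2 * (j : ℝ) + 1) * ((k : ℝ) * π / (2 * (N : ℝ) + 2))) := by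
    intro j
    have h1 : -Real.cos ((2 * (j : ℝ) + 1) * π / (2 * (N : ℝ) + 2))
        = Real.cos (π - (2 * (j : ℝ) + 1) * π / (2 * (N : ℝ) + 2)) := by
      rw [Real.cos_pi_sub]
    rw [h1, heval]
    have h2 : (k : ℝ) * (π - (2 * (j : ℝ) + 1) * π / (2 * (N : ℝ) + 2))
        = (k : ℝ) * π - (2 * (j : ℝ) + 1) * ((k : ℝ) * π / (2 * (N : ℝ) + 2)) := by
      ring
    rw [h2, Real.cos_nat_mul_pi_sub]
  rcases Nat.eq_zero_or_pos k with hk0 | hkpos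
  · subst hk0
    simp only [hsum, heval]
    have hN : ((N : ℝ) + 1) ≠ 0 := by positivity
    simp only [Nat.cast_zero, zero_mul, pow_zero, one_mul, mul_zero, zero_div,
      Real.cos_zero, mul_one]
    rw [intervalIntegral.integral_const, Finset.sum_const, Finset.card_range]
    simp
    field_simp
    ring
  · -- integral is zero
    have hint : (∫ θ in (0:ℝ)..π, Real.cos ((k : ℝ) * θ)) = 0 := by
      have hkne : ((k : ℝ)) ≠ 0 := by positivity
      rw [intervalIntegral.integral_comp_mul_left (fun x => Real.cos x) hkne]
      simp [Real.sin_nat_mul_pi]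
    have hx : (0:ℝ) < (k : ℝ) * π / (2 * (N : ℝ) + 2) := by positivity
    have hxlt : (k : ℝ) * π / (2 * (N : ℝ) + 2) < π := by
      rw [div_lt_iff₀ (by positivity)]
      have : (k : ℝ) < 2 * (N : ℝ) + 2 := by
        have : (k : ℕ) < 2 * N + 2 := by omega
        exact_mod_cast this
      nlinarith [Real.pi_pos]
    have hsin : Real.sin ((k : ℝ) * π / (2 * (N : ℝ) + 2)) ≠ 0 :=
      (Real.sin_pos_of_pos_of_lt_pi hx hxlt).ne'
    have hsc := sum_cos_odd _ hsin N
    have h2N : 2 * ((N : ℝ) + 1) * ((k : ℝ) * π / (2 * (N : ℝ) + 2)) = (k : ℝ) * π := by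
      field_simp
    rw [h2N, Real.sin_nat_mul_pi, zero_div] at hsc
    simp only [hsum, heval]
    rw [hint]
    rw [show (∑ j ∈ Finset.range (N + 1), π / ((N:ℝ) + 1) *
        ((-1) ^ k * Real.cos ((2 * (j : ℝ) + 1) * ((k : ℝ) * π / (2 * (N : ℝ) + 2)))))
      = π / ((N:ℝ) + 1) * (-1) ^ k *
        ∑ j ∈ Finset.range (N + 1), Real.cos ((2 * (j : ℝ) + 1) * ((k : ℝ) * π / (2 * (N : ℝ) + 2)))
      from by rw [Finset.mul_sum]; exact Finset.sum_congr rfl fun j _ => by ring]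
    rw [hsc]
    ring

lemma gcQ_zero (N : ℕ) :
    ∀ d, ∀ p : Polynomial ℝ, p.natDegree ≤ d → p.natDegree ≤ 2 * N + 1 → gcQ N p = 0 := by
  intro d
  induction d with
  | zero =>
      intro p hpd _
      obtain ⟨c, rfl⟩ := Polynomial.natDegree_eq_zero.mp (Nat.le_zero.mp hpd)
      unfold gcQ
      simp only [Polynomial.eval_C]
      rw [intervalIntegral.integral_const, Finset.sum_const, Finset.card_range]
      have hN : ((N : ℝ) + 1) ≠ 0 := by positivity
      simp only [smul_eq_mul, nsmul_eq_mul, Nat.cast_add, Nat.cast_one, sub_zero]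
      field_simp
      ring
  | succ d ihd =>
      intro p hpd hp2
      by_cases hle : p.natDegree ≤ d
      · exact ihd p hle hp2
      · have hdeg : p.natDegree = d + 1 := le_antisymm hpd (by omega)
        have hp0 : p ≠ 0 := by
          intro h; rw [h] at hdeg; simp at hdeg
        set k := d + 1 with hk
        obtain ⟨hTd, hTl⟩ := T_deg k
        have hTne : Polynomial.Chebyshev.T ℝ (k : ℤ) ≠ 0 := by
          rw [← Polynomial.leadingCoeff_ne_zero, hTl]; positivity
        set c : ℝ := p.leadingCoeff / 2 ^ (k - 1) with hc
        have hcne : c ≠ 0 :=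
          div_ne_zero (Polynomial.leadingCoeff_ne_zero.mpr hp0) (by positivity)
        set q' : Polynomial ℝ := Polynomial.C c * Polynomial.Chebyshev.T ℝ (k : ℤ) with hq'
        have hq'ne : q' ≠ 0 := mul_ne_zero (by simpa using hcne) hTne
        have hq'l : q'.leadingCoeff = p.leadingCoeff := by
          rw [hq', Polynomial.leadingCoeff_mul, Polynomial.leadingCoeff_C, hTl, hc]
          field_simp
        have hq'd : q'.natDegree = k := by
          rw [hq', Polynomial.natDegree_mul (by simpa using hcne) hTne,
            Polynomial.natDegree_C, hTd]
          omega
        have hdegeq : p.degree = q'.degree := by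
          rw [Polynomial.degree_eq_natDegree hp0, Polynomial.degree_eq_natDegree hq'ne,
            hdeg, hq'd]
        have hsub := Polynomial.degree_sub_lt hdegeq hp0 hq'l.symm
        have hsubnd : (p - q').natDegree ≤ d := by
          by_cases h0 : p - q' = 0
          · simp [h0]
          · have h1 := Polynomial.natDegree_lt_natDegree h0 hsub
            omega
        have hrw : p = (p - q') + q' := by ring
        rw [hrw, gcQ_add, ihd _ hsubnd (by omega), hq', gcQ_smul, gcQ_T N k (by omega)]
        ring

/-- Gauss–Chebyshev quadrature at the Chebyshev points of the first kind
is exact for polynomials of degree at most `2N+1`. -/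
theorem stmt_7 (N : ℕ) (p : Polynomial ℝ) (hp : p.natDegree ≤ 2 * N + 1) :
    ∫ x in (-1 : ℝ)..1, p.eval x / Real.sqrt (1 - x ^ 2) =
      ∑ j : Fin (N + 1),
        (π / (N + 1)) *
          p.eval (-Real.cos ((2 * (j : ℝ) + 1) * π / (2 * (N : ℝ) + 2))) := by
  have h := gcQ_zero N p.natDegree p le_rfl hp
  unfold gcQ at h
  rw [cheb_subst (fun x => p.eval x)]
  rw [Fin.sum_univ_eq_sum_range
    (fun m : ℕ => (π / ((N : ℝ) + 1)) *
      p.eval (-Real.cos ((2 * (m : ℝ) + 1) * π / (2 * (N : ℝ) + 2)))) (N + 1)]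
  linarith
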